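/- arXiv:1508.00952 — 3 statements merged into one kernel-verified Lean document; each statement's English description precedes it below -/
import Mathlib

section
/- Under the aggregated computational-graph setup, assume in addition that S is twice continuously differentiable (so f is C²) and that the Hessian ∇²f(x₀) is invertible. Let A = [∂_xΦ, ∂_sΦ − I] ∈ ℝ^{m×(n+m)} be the Jacobian of the constraint h(x,s) = Φ(x,s) − s at (x₀,s₀). Then the KKT system [[∇²_{(x,s)}L(x₀,s₀,λ₀), Aᵀ],[A, 0]] · [δx; δs; δλ] = [−∇_{(x,s)}L(x₀,s₀,λ₀); 0] has a unique solution (δx, δs, δλ), and its δx-component is exactly the Newton step of the unconstrained objective, i.e., ∇²f(x₀) · δx = −∇f(x₀). -/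
open Matrix

private lemma dot_ext' {k : ℕ} {a b : Fin k → ℝ} (h : ∀ u, u ⬝ᵥ a = u ⬝ᵥ b) : a = b := by
  funext i
  simpa [dotProduct, Pi.single_apply] using h (Pi.single i 1)

private lemma dot_rep' {k : ℕ} (e : (Fin k → ℝ) →L[ℝ] ℝ) (v : Fin k → ℝ) :
    (fun j => e (Pi.single j 1)) ⬝ᵥ v = e v := by
  conv_rhs => rw [← Finset.univ_sum_single v]
  rw [map_sum, dotProduct]
  refine Finset.sum_congr rfl fun j _ => ?_
  have h1 : Pi.single j (v j) = v j • (Pi.single j 1 : Fin k → ℝ) := by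
    funext i; simp [Pi.single_apply]
  rw [h1]; simp [mul_comm]

/-- Theorem 1 of the paper (aggregated form): at a feasible point, with the
Lagrange multipliers set to the reverse-mode AD adjoints, the KKT system of the
constrained reformulation has a unique solution whose input component is the
Newton step of the unconstrained objective. -/
theorem newton_step_eq_lagrange_newton_step
    (n m : ℕ)
    (g : (Fin n → ℝ) × (Fin m → ℝ) → ℝ)
    (Φ : (Fin n → ℝ) × (Fin m → ℝ) → (Fin m → ℝ))
    (S : (Fin n → ℝ) → (Fin m → ℝ))
    (f : (Fin n → ℝ) → ℝ)
    (L : (Fin n → ℝ) × (Fin m → ℝ) → ℝ)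
    (x₀ : Fin n → ℝ) (s₀ : Fin m → ℝ) (lam₀ : Fin m → ℝ)
    (Φx : Matrix (Fin m) (Fin n) ℝ) (Φs : Matrix (Fin m) (Fin m) ℝ)
    (gf : Fin n → ℝ) (Hf : Matrix (Fin n) (Fin n) ℝ)
    (hg : ContDiff ℝ 2 g) (hΦ : ContDiff ℝ 2 Φ)
    (hS : ContDiff ℝ 2 S)
    (hrec : ∀ x, S x = Φ (x, S x))
    (hf : ∀ x, f x = g (x, S x))
    (hs₀ : s₀ = S x₀)
    (hΦx : ∀ (u : Fin n → ℝ) (v : Fin m → ℝ),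
      fderiv ℝ Φ (x₀, s₀) (u, v) = Φx.mulVec u + Φs.mulVec v)
    (hIinv : IsUnit (1 - Φs))
    (hlam₀ : ∀ v : Fin m → ℝ,
      ((1 - Φs)ᵀ.mulVec lam₀) ⬝ᵥ v = fderiv ℝ g (x₀, s₀) (0, v))
    (hL : ∀ p : (Fin n → ℝ) × (Fin m → ℝ), L p = g p + lam₀ ⬝ᵥ (Φ p - p.2))
    (hgf : ∀ u : Fin n → ℝ, fderiv ℝ f x₀ u = gf ⬝ᵥ u)
    (hHf : ∀ u v : Fin n → ℝ,
      iteratedFDeriv ℝ 2 f x₀ ![u, v] = u ⬝ᵥ Hf.mulVec v)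
    (hHfinv : IsUnit Hf) :
    (∃! p : (Fin n → ℝ) × (Fin m → ℝ) × (Fin m → ℝ),
      (∀ (u : Fin n → ℝ) (v : Fin m → ℝ),
        iteratedFDeriv ℝ 2 L (x₀, s₀) ![(u, v), (p.1, p.2.1)]
          + p.2.2 ⬝ᵥ (Φx.mulVec u + Φs.mulVec v - v)
          = - fderiv ℝ L (x₀, s₀) (u, v))
      ∧ Φx.mulVec p.1 + Φs.mulVec p.2.1 - p.2.1 = 0)
    ∧ (∀ p : (Fin n → ℝ) × (Fin m → ℝ) × (Fin m → ℝ),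
      ((∀ (u : Fin n → ℝ) (v : Fin m → ℝ),
        iteratedFDeriv ℝ 2 L (x₀, s₀) ![(u, v), (p.1, p.2.1)]
          + p.2.2 ⬝ᵥ (Φx.mulVec u + Φs.mulVec v - v)
          = - fderiv ℝ L (x₀, s₀) (u, v))
      ∧ Φx.mulVec p.1 + Φs.mulVec p.2.1 - p.2.1 = 0) →
      Hf.mulVec p.1 = -gf) := by
  classical
  have hgd : Differentiable ℝ g := hg.differentiable two_ne_zero
  have hΦd : Differentiable ℝ Φ := hΦ.differentiable two_ne_zero
  have hSd : Differentiable ℝ S := hS.differentiable two_ne_zero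
  set φ : (Fin n → ℝ) → (Fin n → ℝ) × (Fin m → ℝ) := fun x => (x, S x) with hφdef
  have hφ2 : ContDiff ℝ 2 φ := contDiff_id.prodMk hS
  have hφx₀ : φ x₀ = (x₀, s₀) := by simp [hφdef, ← hs₀]
  -- the dot-product functional
  set c : (Fin m → ℝ) →L[ℝ] ℝ := LinearMap.toContinuousLinearMap
    { toFun := fun w => lam₀ ⬝ᵥ w
      map_add' := fun a b => dotProduct_add lam₀ a b
      map_smul' := fun t w => by simp [dotProduct, Finset.mul_sum, mul_comm, mul_left_comm] } with hcdef
  have hc : ∀ w, c w = lam₀ ⬝ᵥ w := fun _ => rfl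
  have hLfun : L = fun p => g p + c (Φ p - p.2) := funext fun p => by rw [hL p, hc]
  have hL2 : ContDiff ℝ 2 L := by
    rw [hLfun]; exact hg.add (c.contDiff.comp (hΦ.sub contDiff_snd))
  have hLd : Differentiable ℝ L := hL2.differentiable two_ne_zero
  set DL := fderiv ℝ L (x₀, s₀) with hDLdef
  set Dg := fderiv ℝ g (x₀, s₀) with hDgdef
  set DΦ := fderiv ℝ Φ (x₀, s₀) with hDΦdef
  set Su : (Fin n → ℝ) → (Fin m → ℝ) := fun u => fderiv ℝ S x₀ u with hSudef
  -- derivative of L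
  have hLD : HasFDerivAt L (Dg + c.comp (DΦ - ContinuousLinearMap.snd ℝ _ _)) (x₀, s₀) := by
    have h1 : HasFDerivAt (fun p : (Fin n → ℝ) × (Fin m → ℝ) => Φ p - p.2)
        (DΦ - ContinuousLinearMap.snd ℝ _ _) (x₀, s₀) :=
      ((hΦd (x₀, s₀)).hasFDerivAt).sub hasFDerivAt_snd
    have h2 := (c.hasFDerivAt.comp (x₀, s₀) h1)
    have h3 := ((hgd (x₀, s₀)).hasFDerivAt).add h2
    rw [hLfun]; exact h3
  have hDL : ∀ (u : Fin n → ℝ) (v : Fin m → ℝ),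
      DL (u, v) = Dg (u, v) + lam₀ ⬝ᵥ (Φx.mulVec u + Φs.mulVec v - v) := by
    intro u v
    rw [hDLdef, hLD.fderiv]
    simp [hc, ← hΦx u v, hDgdef, hDΦdef]
  have hDL0 : ∀ v : Fin m → ℝ, DL (0, v) = 0 := by
    intro v
    rw [hDL 0 v]
    have h1 : Dg ((0 : Fin n → ℝ), v) = lam₀ ⬝ᵥ ((1 - Φs).mulVec v) := by
      rw [← hlam₀ v, mulVec_transpose, ← dotProduct_mulVec]
    rw [h1, ← dotProduct_add]
    have : (1 - Φs).mulVec v + (Φx.mulVec 0 + Φs.mulVec v - v) = 0 := by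
      rw [sub_mulVec, one_mulVec, mulVec_zero]
      abel
    rw [add_comm] at this ⊢
    rw [this, dotProduct_zero]
  -- derivative of S via the recursion
  have hφ'x : ∀ x, HasFDerivAt φ ((ContinuousLinearMap.id ℝ _).prod (fderiv ℝ S x)) x :=
    fun x => HasFDerivAt.prodMk (hasFDerivAt_id x) (hSd x).hasFDerivAt
  have hSrec : HasFDerivAt S (DΦ.comp ((ContinuousLinearMap.id ℝ _).prod (fderiv ℝ S x₀))) x₀ := by
    have h0 : HasFDerivAt Φ DΦ (φ x₀) := by rw [hφx₀]; exact (hΦd (x₀, s₀)).hasFDerivAt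
    have h1 := h0.comp x₀ (hφ'x x₀)
    have h2 : (Φ ∘ φ) = S := funext fun x => (hrec x).symm
    rwa [h2] at h1
  have hA : ∀ u, Φx.mulVec u + Φs.mulVec (Su u) = Su u := by
    intro u
    have h1 : Su u = DΦ (u, Su u) := by
      conv_lhs => rw [hSudef]
      rw [hSrec.fderiv]
      rfl
    rw [← hΦx u (Su u), ← h1]
  -- f = L ∘ φ
  have hfeq : f = L ∘ φ := by
    funext x
    rw [hf x, Function.comp_apply, hL (φ x)]
    have : Φ (φ x) - (φ x).2 = 0 := by
      show Φ (x, S x) - S x = 0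
      rw [← hrec x, sub_self]
    rw [this, dotProduct_zero, add_zero]
  have hf2 : ContDiff ℝ 2 f := by rw [hfeq]; exact hL2.comp hφ2
  have hfD : ∀ x, HasFDerivAt f
      ((fderiv ℝ L (φ x)).comp ((ContinuousLinearMap.id ℝ _).prod (fderiv ℝ S x))) x := by
    intro x
    have h1 := ((hLd (φ x)).hasFDerivAt).comp x (hφ'x x)
    rwa [← hfeq] at h1
  have hC : ∀ u, gf ⬝ᵥ u = DL (u, (0 : Fin m → ℝ)) := by
    intro u
    have h1 : fderiv ℝ f x₀ u = DL (u, Su u) := by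
      rw [(hfD x₀).fderiv, hφx₀]
      rfl
    have h2 : ((u, Su u) : (Fin n → ℝ) × (Fin m → ℝ)) = (u, 0) + (0, Su u) := by
      simp
    rw [← hgf u, h1, h2, map_add, hDL0, add_zero]
  -- second derivatives
  set D2 := fderiv ℝ (fderiv ℝ L) (x₀, s₀) with hD2def
  have hIt : ∀ a b : (Fin n → ℝ) × (Fin m → ℝ),
      iteratedFDeriv ℝ 2 L (x₀, s₀) ![a, b] = D2 a b := by
    intro a b
    rw [iteratedFDeriv_two_apply]
    simp
    rfl
  have hdf1 : Differentiable ℝ (fderiv ℝ f) :=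
    (hf2.fderiv_right (m := 1) (by norm_num)).differentiable one_ne_zero
  have hDL1 : Differentiable ℝ (fderiv ℝ L) :=
    (hL2.fderiv_right (m := 1) (by norm_num)).differentiable one_ne_zero
  have hDS1 : Differentiable ℝ (fderiv ℝ S) :=
    (hS.fderiv_right (m := 1) (by norm_num)).differentiable one_ne_zero
  have hD : ∀ u v, u ⬝ᵥ Hf.mulVec v = D2 (u, Su u) (v, Su v) := by
    intro u v
    -- left side as second derivative of f
    have h1 : u ⬝ᵥ Hf.mulVec v = (fderiv ℝ (fderiv ℝ f) x₀ u) v := by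
      rw [← hHf u v, iteratedFDeriv_two_apply]; simp
    -- as derivative of x ↦ fderiv f x v
    have h2 : fderiv ℝ (fun x => fderiv ℝ f x v) x₀ u = (fderiv ℝ (fderiv ℝ f) x₀ u) v := by
      rw [fderiv_clm_apply (hdf1 x₀) (differentiableAt_const v)]
      simp
    -- compute that derivative via the chain rule
    have hFeq : (fun x => fderiv ℝ f x v)
        = fun x => (fderiv ℝ L (φ x)) (v, fderiv ℝ S x v) := by
      funext x
      rw [(hfD x).fderiv]
      rfl
    have hAφ : HasFDerivAt (fun x => fderiv ℝ L (φ x))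
        (D2.comp ((ContinuousLinearMap.id ℝ _).prod (fderiv ℝ S x₀))) x₀ := by
      have h0 : HasFDerivAt (fderiv ℝ L) D2 (φ x₀) := by
        rw [hφx₀]; exact (hDL1 (x₀, s₀)).hasFDerivAt
      exact h0.comp x₀ (hφ'x x₀)
    have hin : HasFDerivAt (fun x => fderiv ℝ S x v)
        ((fderiv ℝ S x₀).comp (0 : (Fin n → ℝ) →L[ℝ] (Fin n → ℝ))
          + (fderiv ℝ (fderiv ℝ S) x₀).flip v) x₀ :=
      HasFDerivAt.clm_apply (hDS1 x₀).hasFDerivAt (hasFDerivAt_const v x₀)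
    have hψ : HasFDerivAt (fun x => ((v, fderiv ℝ S x v) : (Fin n → ℝ) × (Fin m → ℝ)))
        ((0 : (Fin n → ℝ) →L[ℝ] (Fin n → ℝ)).prod
          ((fderiv ℝ S x₀).comp (0 : (Fin n → ℝ) →L[ℝ] (Fin n → ℝ))
            + (fderiv ℝ (fderiv ℝ S) x₀).flip v)) x₀ :=
      HasFDerivAt.prodMk (hasFDerivAt_const v x₀) hin
    have hFD := HasFDerivAt.clm_apply hAφ hψ
    rw [h1, ← h2, hFeq, hFD.fderiv]
    have hz : DL ((0 : Fin n → ℝ) ,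
        ((fderiv ℝ S x₀).comp (0 : (Fin n → ℝ) →L[ℝ] (Fin n → ℝ))
          + (fderiv ℝ (fderiv ℝ S) x₀).flip v) u) = 0 := hDL0 _
    simp only [ContinuousLinearMap.add_apply, ContinuousLinearMap.comp_apply,
      ContinuousLinearMap.flip_apply, ContinuousLinearMap.prod_apply,
      ContinuousLinearMap.zero_apply, ContinuousLinearMap.coe_id', id_eq, hφx₀]
    rw [show (fderiv ℝ S x₀) (0 : Fin n → ℝ) = 0 from map_zero _, zero_add,
      ← hDLdef, hDL0, zero_add]
  -- algebraic part
  have hMinv : Function.Injective (1 - Φs).mulVec := mulVec_injective_iff_isUnit.mpr hIinv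
  have hMT : IsUnit (1 - Φs)ᵀ := by
    rw [Matrix.isUnit_iff_isUnit_det, Matrix.det_transpose, ← Matrix.isUnit_iff_isUnit_det]
    exact hIinv
  have hMTinv : Function.Injective (1 - Φs)ᵀ.mulVec := mulVec_injective_iff_isUnit.mpr hMT
  have hHinj : Function.Injective Hf.mulVec := mulVec_injective_iff_isUnit.mpr hHfinv
  have hds : ∀ (dx : Fin n → ℝ) (ds : Fin m → ℝ),
      Φx.mulVec dx + Φs.mulVec ds - ds = 0 → ds = Su dx := by
    intro dx ds h
    apply hMinv
    have h2 := hA dx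
    rw [sub_mulVec, one_mulVec, sub_mulVec, one_mulVec]
    linear_combination h2 - h
  have hNewton : ∀ (dx : Fin n → ℝ) (ds dl : Fin m → ℝ),
      (∀ u v, D2 (u, v) (dx, ds) + dl ⬝ᵥ (Φx.mulVec u + Φs.mulVec v - v) = - DL (u, v)) →
      Φx.mulVec dx + Φs.mulVec ds - ds = 0 → Hf.mulVec dx = -gf := by
    intro dx ds dl hk hcon
    have hds' := hds dx ds hcon
    apply dot_ext'
    intro u
    have h0 := hk u (Su u)
    have hzero : Φx.mulVec u + Φs.mulVec (Su u) - Su u = 0 := by rw [hA u]; exact sub_self _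
    rw [hzero, dotProduct_zero, add_zero, hds'] at h0
    have hR : DL ((u, Su u) : (Fin n → ℝ) × (Fin m → ℝ)) = gf ⬝ᵥ u := by
      rw [show ((u, Su u) : (Fin n → ℝ) × (Fin m → ℝ)) = (u, 0) + (0, Su u) by simp,
        map_add, hDL0, add_zero, ← hC u]
    rw [hR] at h0
    rw [hD u dx, h0, dotProduct_neg, dotProduct_comm]
  -- the solution
  have hdet : IsUnit Hf.det := (Matrix.isUnit_iff_isUnit_det Hf).mp hHfinv
  set dx : Fin n → ℝ := Hf⁻¹.mulVec (-gf) with hdxdef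
  have hdx : Hf.mulVec dx = -gf := by
    rw [hdxdef, mulVec_mulVec, Matrix.mul_nonsing_inv _ hdet, one_mulVec]
  set ds := Su dx with hdsdef
  have hcon : Φx.mulVec dx + Φs.mulVec ds - ds = 0 := by rw [hdsdef, hA dx]; exact sub_self _
  set e : (Fin m → ℝ) →L[ℝ] ℝ :=
    (D2.comp (ContinuousLinearMap.inr ℝ (Fin n → ℝ) (Fin m → ℝ))).flip (dx, ds) with hedef
  have he : ∀ v, e v = D2 (0, v) (dx, ds) := fun v => rfl
  set dl := ((1 - Φs)ᵀ)⁻¹.mulVec (fun j => e (Pi.single j 1)) with hdldef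
  have hdetT : IsUnit (1 - Φs)ᵀ.det := (Matrix.isUnit_iff_isUnit_det _).mp hMT
  have hdlv : ∀ v, dl ⬝ᵥ ((1 - Φs).mulVec v) = D2 (0, v) (dx, ds) := by
    intro v
    rw [dotProduct_mulVec, ← mulVec_transpose, hdldef, mulVec_mulVec,
      Matrix.mul_nonsing_inv _ hdetT, one_mulVec, dot_rep', he]
  have I1 : ∀ v, D2 ((0 : Fin n → ℝ), v) (dx, ds) + dl ⬝ᵥ (Φs.mulVec v - v) = 0 := by
    intro v
    have h1 : Φs.mulVec v - v = -((1 - Φs).mulVec v) := by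
      rw [sub_mulVec, one_mulVec, neg_sub]
    rw [h1, dotProduct_neg, hdlv v, add_neg_cancel]
  have I2 : ∀ u, D2 ((u, (0 : Fin m → ℝ))) (dx, ds) + dl ⬝ᵥ (Φx.mulVec u) = - DL (u, 0) := by
    intro u
    have hN : D2 (u, Su u) (dx, ds) = -(gf ⬝ᵥ u) := by
      rw [hdsdef, ← hD u dx, hdx, dotProduct_neg, dotProduct_comm]
    have hsp : ((u, Su u) : (Fin n → ℝ) × (Fin m → ℝ)) = (u, 0) + (0, Su u) := by simp
    have h2 : D2 (((u, 0) : (Fin n → ℝ) × (Fin m → ℝ)) + (0, Su u)) (dx, ds)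
        = D2 (u, 0) (dx, ds) + D2 (0, Su u) (dx, ds) := by rw [map_add]; rfl
    have h3 : D2 ((0 : Fin n → ℝ), Su u) (dx, ds) = dl ⬝ᵥ (Φx.mulVec u) := by
      rw [← hdlv (Su u)]
      congr 1
      rw [sub_mulVec, one_mulVec]
      linear_combination - hA u
    have h4 : D2 ((u, (0 : Fin m → ℝ))) (dx, ds) + D2 ((0 : Fin n → ℝ), Su u) (dx, ds)
        = -(gf ⬝ᵥ u) := by rw [← h2, ← hsp]; exact hN
    rw [← hC u]
    linarith
  have hKKT : ∀ u v, D2 (u, v) (dx, ds) + dl ⬝ᵥ (Φx.mulVec u + Φs.mulVec v - v)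
      = - DL (u, v) := by
    intro u v
    have hsp : ((u, v) : (Fin n → ℝ) × (Fin m → ℝ)) = (u, 0) + (0, v) := by simp
    have h2 : D2 (((u, 0) : (Fin n → ℝ) × (Fin m → ℝ)) + (0, v)) (dx, ds)
        = D2 (u, 0) (dx, ds) + D2 (0, v) (dx, ds) := by rw [map_add]; rfl
    have h3 : DL (((u, 0) : (Fin n → ℝ) × (Fin m → ℝ)) + (0, v)) = DL (u, 0) + DL (0, v) := by
      rw [map_add]
    have h4 : dl ⬝ᵥ (Φx.mulVec u + Φs.mulVec v - v)
        = dl ⬝ᵥ (Φx.mulVec u) + dl ⬝ᵥ (Φs.mulVec v - v) := by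
      rw [add_sub_assoc, dotProduct_add]
    rw [hsp, h2, h3, h4]
    have g1 := I1 v
    have g2 := I2 u
    have g3 := hDL0 v
    linarith
  have huniq : ∀ (dx' : Fin n → ℝ) (ds' dl' : Fin m → ℝ),
      (∀ u v, D2 (u, v) (dx', ds') + dl' ⬝ᵥ (Φx.mulVec u + Φs.mulVec v - v) = - DL (u, v)) →
      Φx.mulVec dx' + Φs.mulVec ds' - ds' = 0 → dx' = dx ∧ ds' = ds ∧ dl' = dl := by
    intro dx' ds' dl' hk hcon'
    have h1 : Hf.mulVec dx' = -gf := hNewton dx' ds' dl' hk hcon'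
    have hdx' : dx' = dx := hHinj (by rw [h1, hdx])
    have hds'' : ds' = ds := by rw [hds dx' ds' hcon', hdx', hdsdef]
    refine ⟨hdx', hds'', ?_⟩
    apply hMTinv
    have key : ∀ v, dl' ⬝ᵥ ((1 - Φs).mulVec v) = dl ⬝ᵥ ((1 - Φs).mulVec v) := by
      intro v
      have h0 := hk 0 v
      rw [hdx', hds'', mulVec_zero, zero_add, hDL0, neg_zero] at h0
      have h1' : Φs.mulVec v - v = -((1 - Φs).mulVec v) := by
        rw [sub_mulVec, one_mulVec, neg_sub]
      rw [h1', dotProduct_neg] at h0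
      rw [hdlv v]
      linarith
    apply dot_ext'
    intro u
    have hsw : ∀ w : Fin m → ℝ, u ⬝ᵥ (1 - Φs)ᵀ.mulVec w = w ⬝ᵥ ((1 - Φs).mulVec u) := by
      intro w
      rw [mulVec_transpose, dotProduct_comm, ← dotProduct_mulVec]
    rw [hsw dl', hsw dl]
    exact key u
  refine ⟨⟨(dx, ds, dl), ⟨?_, ?_⟩, ?_⟩, ?_⟩
  · intro u v
    rw [hIt]
    exact hKKT u v
  · exact hcon
  · rintro ⟨dx', ds', dl'⟩ ⟨hk, hcon'⟩
    simp only [hIt] at hk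
    obtain ⟨e1, e2, e3⟩ := huniq dx' ds' dl' hk hcon'
    simp [e1, e2, e3]
  · rintro ⟨dx', ds', dl'⟩ ⟨hk, hcon'⟩
    simp only [hIt] at hk
    exact hNewton dx' ds' dl' hk hcon'
end

section
/- Under the aggregated computational-graph setup, the adjoint multiplier λ₀ makes the Lagrangian stationary in the intermediate states and reproduces the gradient of the objective in the inputs: ∇_s L(x₀, s₀, λ₀) = 0, and ∇_x L(x₀, s₀, λ₀) = ∇f(x₀); equivalently, ∇f(x₀) = ∇_x g(x₀,s₀) + (∂_xΦ)ᵀ λ₀. -/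
open Matrix

/-- Correctness of reverse-mode AD (aggregated): the adjoint multipliers make the
Lagrangian stationary in the intermediate states and reproduce the gradient of the
objective in the inputs. -/
theorem reverse_ad_adjoints_stationary
    (n m : ℕ)
    (g : (Fin n → ℝ) × (Fin m → ℝ) → ℝ)
    (Φ : (Fin n → ℝ) × (Fin m → ℝ) → (Fin m → ℝ))
    (S : (Fin n → ℝ) → (Fin m → ℝ))
    (f : (Fin n → ℝ) → ℝ)
    (L : (Fin n → ℝ) × (Fin m → ℝ) → ℝ)
    (x₀ : Fin n → ℝ) (s₀ : Fin m → ℝ) (lam₀ : Fin m → ℝ)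
    (Φx : Matrix (Fin m) (Fin n) ℝ) (Φs : Matrix (Fin m) (Fin m) ℝ)
    (hg : ContDiff ℝ 2 g) (hΦ : ContDiff ℝ 2 Φ)
    (hS : Differentiable ℝ S)
    (hrec : ∀ x, S x = Φ (x, S x))
    (hf : ∀ x, f x = g (x, S x))
    (hs₀ : s₀ = S x₀)
    (hΦx : ∀ (u : Fin n → ℝ) (v : Fin m → ℝ),
      fderiv ℝ Φ (x₀, s₀) (u, v) = Φx.mulVec u + Φs.mulVec v)
    (hIinv : IsUnit (1 - Φs))
    (hlam₀ : ∀ v : Fin m → ℝ,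
      ((1 - Φs)ᵀ.mulVec lam₀) ⬝ᵥ v = fderiv ℝ g (x₀, s₀) (0, v))
    (hL : ∀ p : (Fin n → ℝ) × (Fin m → ℝ), L p = g p + lam₀ ⬝ᵥ (Φ p - p.2)) :
    (∀ v : Fin m → ℝ, fderiv ℝ L (x₀, s₀) (0, v) = 0)
    ∧ (∀ u : Fin n → ℝ, fderiv ℝ L (x₀, s₀) (u, 0) = fderiv ℝ f x₀ u)
    ∧ (∀ u : Fin n → ℝ,
        fderiv ℝ f x₀ u = fderiv ℝ g (x₀, s₀) (u, 0) + (Φx.mulVec u) ⬝ᵥ lam₀) := by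
  have hgd : Differentiable ℝ g := hg.differentiable two_ne_zero
  have hΦd : Differentiable ℝ Φ := hΦ.differentiable two_ne_zero
  set Dg := fderiv ℝ g (x₀, s₀) with hDg
  set DΦ := fderiv ℝ Φ (x₀, s₀) with hDΦ
  set DS := fderiv ℝ S x₀ with hDS
  let ℓ : (Fin m → ℝ) →L[ℝ] ℝ :=
    LinearMap.toContinuousLinearMap
      { toFun := fun w => lam₀ ⬝ᵥ w
        map_add' := fun a b => dotProduct_add lam₀ a b
        map_smul' := fun c a => by
          simp [dotProduct_smul, smul_eq_mul] }
  have hℓ : ∀ w, ℓ w = lam₀ ⬝ᵥ w := fun w => rfl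
  have hgfd : HasFDerivAt g Dg (x₀, s₀) := (hgd _).hasFDerivAt
  have hΦfd : HasFDerivAt Φ DΦ (x₀, s₀) := (hΦd _).hasFDerivAt
  have hgfd' : HasFDerivAt g Dg (x₀, S x₀) := by rw [← hs₀]; exact hgfd
  have hΦfd' : HasFDerivAt Φ DΦ (x₀, S x₀) := by rw [← hs₀]; exact hΦfd
  have hsub : HasFDerivAt (fun p : (Fin n → ℝ) × (Fin m → ℝ) => Φ p - p.2)
      (DΦ - ContinuousLinearMap.snd ℝ _ _) (x₀, s₀) := hΦfd.sub (hasFDerivAt_snd)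
  have hLfd : HasFDerivAt L
      (Dg + ℓ.comp (DΦ - ContinuousLinearMap.snd ℝ _ _)) (x₀, s₀) := by
    have : L = fun p => g p + lam₀ ⬝ᵥ (Φ p - p.2) := funext hL
    rw [this]
    exact hgfd.add ((ℓ.hasFDerivAt).comp _ hsub)
  have hLeq : fderiv ℝ L (x₀, s₀) = Dg + ℓ.comp (DΦ - ContinuousLinearMap.snd ℝ _ _) :=
    hLfd.fderiv
  have hSfd : HasFDerivAt S DS x₀ := (hS x₀).hasFDerivAt
  have hpair : HasFDerivAt (fun x => (x, S x))
      ((ContinuousLinearMap.id ℝ (Fin n → ℝ)).prod DS) x₀ :=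
    HasFDerivAt.prodMk (hasFDerivAt_id x₀) hSfd
  have hffd : HasFDerivAt f
      (Dg.comp ((ContinuousLinearMap.id ℝ (Fin n → ℝ)).prod DS)) x₀ := by
    have : f = fun x => g (x, S x) := funext hf
    rw [this]
    exact HasFDerivAt.comp x₀ hgfd' hpair
  have hfeq : ∀ u, fderiv ℝ f x₀ u = Dg (u, DS u) := by
    intro u
    rw [hffd.fderiv]; rfl
  have hrecd : ∀ u, DS u = Φx.mulVec u + Φs.mulVec (DS u) := by
    intro u
    have hS2 : HasFDerivAt S
        (DΦ.comp ((ContinuousLinearMap.id ℝ (Fin n → ℝ)).prod DS)) x₀ := by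
      have : S = fun x => Φ (x, S x) := funext hrec
      nth_rewrite 1 [this]
      exact HasFDerivAt.comp x₀ hΦfd' hpair
    have huniq := hSfd.unique hS2
    have hu : DS u = DΦ (u, DS u) := by
      conv_lhs => rw [huniq]
      rfl
    exact hu.trans (hΦx u (DS u))
  have hdot : ∀ v : Fin m → ℝ,
      Dg (0, v) = lam₀ ⬝ᵥ v - lam₀ ⬝ᵥ Φs.mulVec v := by
    intro v
    rw [← hlam₀ v, Matrix.mulVec_transpose, ← Matrix.dotProduct_mulVec,
      Matrix.sub_mulVec, Matrix.one_mulVec, dotProduct_sub]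
  have h3 : ∀ u : Fin n → ℝ,
      lam₀ ⬝ᵥ DS u - lam₀ ⬝ᵥ Φs.mulVec (DS u) = lam₀ ⬝ᵥ Φx.mulVec u := by
    intro u
    have h4 : Φx.mulVec u = DS u - Φs.mulVec (DS u) :=
      eq_sub_of_add_eq (hrecd u).symm
    rw [← dotProduct_sub, ← h4]
  have h2 : ∀ u : Fin n → ℝ, Dg (u, DS u) = Dg (u, 0) + Dg (0, DS u) := by
    intro u
    rw [← ContinuousLinearMap.map_add]
    congr 1
    simp [Prod.mk_add_mk]
  have hsnd : ∀ (a : Fin n → ℝ) (b : Fin m → ℝ),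
      (ContinuousLinearMap.snd ℝ (Fin n → ℝ) (Fin m → ℝ)) (a, b) = b := fun _ _ => rfl
  have hΦ0v : ∀ v : Fin m → ℝ, DΦ (0, v) = Φs.mulVec v := by
    intro v; rw [hΦx 0 v]; simp
  have hΦu0 : ∀ u : Fin n → ℝ, DΦ (u, 0) = Φx.mulVec u := by
    intro u; rw [hΦx u 0]; simp
  refine ⟨?_, ?_, ?_⟩
  · intro v
    rw [hLeq]
    simp only [ContinuousLinearMap.add_apply, ContinuousLinearMap.comp_apply,
      ContinuousLinearMap.sub_apply, hsnd, hℓ]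
    rw [hdot v, hΦ0v v, dotProduct_sub]
    ring
  · intro u
    rw [hLeq, hfeq u]
    simp only [ContinuousLinearMap.add_apply, ContinuousLinearMap.comp_apply,
      ContinuousLinearMap.sub_apply, hsnd, hℓ]
    rw [hΦu0 u, h2 u, hdot (DS u), h3 u]
    simp [dotProduct_sub]
  · intro u
    rw [hfeq u, h2 u, hdot (DS u)]
    rw [h3 u, dotProduct_comm]
end

section
/- Under the aggregated computational-graph setup, assume in addition that S is twice continuously differentiable. Let J = [I; S'(x₀)] ∈ ℝ^{(n+m)×n} (the matrix stacking the identity on top of S'(x₀)). Then the Hessian of the objective equals the reduced Hessian of the Lagrangian evaluated at the adjoint multipliers: for all u, v ∈ ℝ^n, ⟨u, ∇²f(x₀) v⟩ = ⟨J u, ∇²_{(x,s)}L(x₀, s₀, λ₀) (J v)⟩. -/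
open Matrix

lemma second_fderiv_comp {E F G : Type*}
    [NormedAddCommGroup E] [NormedSpace ℝ E]
    [NormedAddCommGroup F] [NormedSpace ℝ F]
    [NormedAddCommGroup G] [NormedSpace ℝ G]
    (L : F → G) (T : E → F) (hL : ContDiff ℝ 2 L) (hT : ContDiff ℝ 2 T)
    (x₀ : E) (u v : E) :
    fderiv ℝ (fderiv ℝ (L ∘ T)) x₀ u v =
      fderiv ℝ (fderiv ℝ L) (T x₀) (fderiv ℝ T x₀ u) (fderiv ℝ T x₀ v)
        + fderiv ℝ L (T x₀) (fderiv ℝ (fderiv ℝ T) x₀ u v) := by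
  have hL1 : ContDiff ℝ 1 (fderiv ℝ L) := hL.fderiv_right (by norm_num)
  have hT1 : ContDiff ℝ 1 (fderiv ℝ T) := hT.fderiv_right (by norm_num)
  have hTd : Differentiable ℝ T := hT.differentiable two_ne_zero
  have hLd : Differentiable ℝ L := hL.differentiable two_ne_zero
  have hfe : fderiv ℝ (L ∘ T) = fun x => (fderiv ℝ L (T x)).comp (fderiv ℝ T x) :=
    funext fun x => fderiv_comp x (hLd _) (hTd _)
  have hA : DifferentiableAt ℝ (fun x => fderiv ℝ L (T x)) x₀ :=
    ((hL1.comp (hT.of_le one_le_two)).differentiable one_ne_zero) x₀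
  have hB : DifferentiableAt ℝ (fderiv ℝ T) x₀ := (hT1.differentiable one_ne_zero) x₀
  have hAder : fderiv ℝ (fun x => fderiv ℝ L (T x)) x₀
      = (fderiv ℝ (fderiv ℝ L) (T x₀)).comp (fderiv ℝ T x₀) :=
    fderiv_comp x₀ (hL1.differentiable one_ne_zero (T x₀)) (hTd x₀)
  rw [hfe, fderiv_clm_comp hA hB]
  simp [hAder, add_comm]

/-- With multipliers set to the reverse-AD adjoints, the Hessian of the objective
equals the reduced Hessian of the Lagrangian: for all u, v,
⟨u, ∇²f(x₀) v⟩ = ⟨J u, ∇²L(x₀,s₀,lam₀) (J v)⟩ where J u = (u, S'(x₀) u). -/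
theorem objective_hessian_eq_reduced_lagrangian_hessian
    (n m : ℕ)
    (g : (Fin n → ℝ) × (Fin m → ℝ) → ℝ)
    (Φ : (Fin n → ℝ) × (Fin m → ℝ) → (Fin m → ℝ))
    (S : (Fin n → ℝ) → (Fin m → ℝ))
    (f : (Fin n → ℝ) → ℝ)
    (L : (Fin n → ℝ) × (Fin m → ℝ) → ℝ)
    (x₀ : Fin n → ℝ) (s₀ : Fin m → ℝ) (lam₀ : Fin m → ℝ)
    (Φx : Matrix (Fin m) (Fin n) ℝ) (Φs : Matrix (Fin m) (Fin m) ℝ)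
    (hg : ContDiff ℝ 2 g) (hΦ : ContDiff ℝ 2 Φ)
    (hS : ContDiff ℝ 2 S)
    (hrec : ∀ x, S x = Φ (x, S x))
    (hf : ∀ x, f x = g (x, S x))
    (hs₀ : s₀ = S x₀)
    (hΦx : ∀ (u : Fin n → ℝ) (v : Fin m → ℝ),
      fderiv ℝ Φ (x₀, s₀) (u, v) = Φx.mulVec u + Φs.mulVec v)
    (hIinv : IsUnit (1 - Φs))
    (hlam₀ : ∀ v : Fin m → ℝ,
      ((1 - Φs)ᵀ.mulVec lam₀) ⬝ᵥ v = fderiv ℝ g (x₀, s₀) (0, v))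
    (hL : ∀ p : (Fin n → ℝ) × (Fin m → ℝ), L p = g p + lam₀ ⬝ᵥ (Φ p - p.2)) :
    ∀ u v : Fin n → ℝ,
      iteratedFDeriv ℝ 2 f x₀ ![u, v]
        = iteratedFDeriv ℝ 2 L (x₀, s₀)
            ![(u, fderiv ℝ S x₀ u), (v, fderiv ℝ S x₀ v)] := by
  subst hs₀
  intro u v
  -- dot product with lam₀ as a CLM
  set D : (Fin m → ℝ) →L[ℝ] ℝ := ∑ i, lam₀ i • ContinuousLinearMap.proj i with hD
  have hDapp : ∀ w : Fin m → ℝ, D w = lam₀ ⬝ᵥ w := by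
    intro w
    simp [hD, ContinuousLinearMap.sum_apply, ContinuousLinearMap.proj_apply, dotProduct]
  -- L is C²
  have hLfun : L = fun p => g p + D (Φ p - p.2) := by
    funext p; rw [hL p, hDapp]
  have hLC : ContDiff ℝ 2 L := by
    rw [hLfun]
    exact hg.add (D.contDiff.comp (hΦ.sub contDiff_snd))
  -- T and f = L ∘ T
  set T : (Fin n → ℝ) → (Fin n → ℝ) × (Fin m → ℝ) := fun x => (x, S x) with hTdef
  have hT : ContDiff ℝ 2 T := contDiff_id.prodMk hS
  have hfL : f = L ∘ T := by
    funext x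
    simp only [Function.comp_apply, hf x, hL, hTdef]
    rw [← hrec x]
    simp
  -- first derivative of T
  have hSd : Differentiable ℝ S := hS.differentiable two_ne_zero
  have hTu : ∀ w, fderiv ℝ T x₀ w = (w, fderiv ℝ S x₀ w) := by
    intro w
    have h : HasFDerivAt T ((ContinuousLinearMap.id ℝ (Fin n → ℝ)).prod (fderiv ℝ S x₀)) x₀ :=
      HasFDerivAt.prodMk (hasFDerivAt_id x₀) (hSd x₀).hasFDerivAt
    rw [h.fderiv]; rfl
  -- second derivative of T
  have hS1 : ContDiff ℝ 1 (fderiv ℝ S) := hS.fderiv_right (by norm_num)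
  have hTf : fderiv ℝ T = fun x =>
      (ContinuousLinearMap.compL ℝ (Fin n → ℝ) (Fin m → ℝ) ((Fin n → ℝ) × (Fin m → ℝ))
          (ContinuousLinearMap.inr ℝ (Fin n → ℝ) (Fin m → ℝ)))
        (fderiv ℝ S x) + ContinuousLinearMap.inl ℝ (Fin n → ℝ) (Fin m → ℝ) := by
    funext x
    have h : HasFDerivAt T ((ContinuousLinearMap.id ℝ (Fin n → ℝ)).prod (fderiv ℝ S x)) x :=
      HasFDerivAt.prodMk (hasFDerivAt_id x) (hSd x).hasFDerivAt
    rw [h.fderiv]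
    ext w <;> simp
  have hTT : fderiv ℝ (fderiv ℝ T) x₀ u v
      = ((0 : Fin n → ℝ), fderiv ℝ (fderiv ℝ S) x₀ u v) := by
    rw [hTf]
    have h : HasFDerivAt (fun x =>
        (ContinuousLinearMap.compL ℝ (Fin n → ℝ) (Fin m → ℝ) ((Fin n → ℝ) × (Fin m → ℝ))
            (ContinuousLinearMap.inr ℝ (Fin n → ℝ) (Fin m → ℝ)))
          (fderiv ℝ S x) + ContinuousLinearMap.inl ℝ (Fin n → ℝ) (Fin m → ℝ))
        ((ContinuousLinearMap.compL ℝ (Fin n → ℝ) (Fin m → ℝ) ((Fin n → ℝ) × (Fin m → ℝ))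
            (ContinuousLinearMap.inr ℝ (Fin n → ℝ) (Fin m → ℝ))).comp
          (fderiv ℝ (fderiv ℝ S) x₀)) x₀ :=
      (((ContinuousLinearMap.compL ℝ (Fin n → ℝ) (Fin m → ℝ) ((Fin n → ℝ) × (Fin m → ℝ))
          (ContinuousLinearMap.inr ℝ (Fin n → ℝ) (Fin m → ℝ))).hasFDerivAt.comp x₀
        (hS1.differentiable one_ne_zero x₀).hasFDerivAt).add_const _)
    rw [h.fderiv]
    simp
  -- the multiplier kills the correction term
  have hL0 : ∀ w : Fin m → ℝ, fderiv ℝ L (x₀, S x₀) ((0 : Fin n → ℝ), w) = 0 := by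
    intro w
    have hΦd : DifferentiableAt ℝ Φ (x₀, S x₀) := (hΦ.differentiable two_ne_zero) _
    have h2 : HasFDerivAt (fun p : (Fin n → ℝ) × (Fin m → ℝ) => D (Φ p - p.2))
        (D.comp (fderiv ℝ Φ (x₀, S x₀) - ContinuousLinearMap.snd ℝ (Fin n → ℝ) (Fin m → ℝ)))
        (x₀, S x₀) :=
      D.hasFDerivAt.comp _ (hΦd.hasFDerivAt.sub hasFDerivAt_snd)
    have h3 : HasFDerivAt L (fderiv ℝ g (x₀, S x₀)
        + D.comp (fderiv ℝ Φ (x₀, S x₀) - ContinuousLinearMap.snd ℝ (Fin n → ℝ) (Fin m → ℝ)))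
        (x₀, S x₀) := by
      rw [hLfun]
      exact ((hg.differentiable two_ne_zero) _).hasFDerivAt.add h2
    rw [h3.fderiv]
    have hgw : fderiv ℝ g (x₀, S x₀) ((0 : Fin n → ℝ), w) = lam₀ ⬝ᵥ (w - Φs.mulVec w) := by
      rw [← hlam₀ w, Matrix.mulVec_transpose, ← Matrix.dotProduct_mulVec,
        Matrix.sub_mulVec, Matrix.one_mulVec]
    simp [hDapp, hΦx, hgw, Matrix.mulVec_zero, dotProduct_sub, dotProduct_add]
  -- conclude
  rw [iteratedFDeriv_two_apply, iteratedFDeriv_two_apply]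
  simp only [Matrix.cons_val_zero, Matrix.cons_val_one, Matrix.head_cons]
  rw [hfL, second_fderiv_comp L T hLC hT x₀ u v, hTT]
  have hTx₀ : T x₀ = (x₀, S x₀) := rfl
  rw [hTx₀, hL0, add_zero, hTu, hTu]
end
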